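/- arXiv:1002.3131 — 2 statements merged into one kernel-verified Lean document; each statement's English description precedes it below -/
import Mathlib

section
/- Let E be a type, At : E → Set A, and for each j ∈ {1,…,k} let t_j : E → E and τ_j : A → A be injective maps such that At(t_j(x)) = τ_j '' At(x) for all x, the images τ_j '' A are pairwise disjoint for distinct j, and every At(x) for x in a given finite set S is nonempty. Then the bridge-equivalence classes (generated by overlapping atom sets) of the set ⋃_{j=1}^k t_j '' S are exactly the sets t_j '' 𝔟, where j ∈ {1,…,k} and 𝔟 ranges over the bridge-equivalence classes of S. -/
/-- One step of the bridge relation on `D₀`: both elements are in `D₀`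
and their atom sets overlap. -/
def bridgeStep {E A : Type*} (At : E → Set A) (D₀ : Set E) (x y : E) : Prop :=
  x ∈ D₀ ∧ y ∈ D₀ ∧ (At x ∩ At y).Nonempty

/-- The bridge relation: finite chains inside `D₀` of elements with
pairwise-overlapping atom sets. -/
def Bridge {E A : Type*} (At : E → Set A) (D₀ : Set E) : E → E → Prop :=
  Relation.ReflTransGen (bridgeStep At D₀)

/-- The bridge-equivalence classes of `D₀`. -/
def bridgeClasses {E A : Type*} (At : E → Set A) (D₀ : Set E) : Set (Set E) :=
  {C | ∃ α ∈ D₀, C = {β | Bridge At D₀ α β}}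

lemma bridge_mem {E A : Type*} {At : E → Set A} {D₀ : Set E} {x y : E}
    (h : Bridge At D₀ x y) (hx : x ∈ D₀) : y ∈ D₀ := by
  induction h with
  | refl => exact hx
  | tail _ step _ => exact step.2.1

/-- Taking `k` disjointly-renamed copies of a (finite, atom-nonempty) set `S`
multiplies its bridge components by `k`: the bridge classes of `⋃_j t_j '' S`
are exactly the sets `t_j '' 𝔟` for `j ∈ [k]` and `𝔟` a bridge class of `S`. -/
theorem stmt5 {E A : Type*} (At : E → Set A) (k : ℕ) (S : Set E) (hS : S.Finite)
    (t : Fin k → E → E) (τ : Fin k → A → A)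
    (ht : ∀ j, Function.Injective (t j)) (hτ : ∀ j, Function.Injective (τ j))
    (hAt : ∀ j x, At (t j x) = τ j '' At x)
    (hdisj : ∀ j j' : Fin k, j ≠ j' → Set.range (τ j) ∩ Set.range (τ j') = ∅)
    (hne : ∀ x ∈ S, (At x).Nonempty) :
    bridgeClasses At (⋃ j, t j '' S)
      = {C | ∃ j : Fin k, ∃ 𝔟 ∈ bridgeClasses At S, C = t j '' 𝔟} := by
  set D : Set E := ⋃ j, t j '' S with hD
  -- forward transport
  have fwd : ∀ (j : Fin k) (x y : E), Bridge At S x y → Bridge At D (t j x) (t j y) := by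
    intro j x y h
    induction h with
    | refl => exact Relation.ReflTransGen.refl
    | tail _ step ih =>
      obtain ⟨h1, h2, a, ha1, ha2⟩ := step
      refine ih.tail ⟨?_, ?_, ⟨τ j a, ?_, ?_⟩⟩
      · exact Set.mem_iUnion.2 ⟨j, Set.mem_image_of_mem _ h1⟩
      · exact Set.mem_iUnion.2 ⟨j, Set.mem_image_of_mem _ h2⟩
      · rw [hAt]; exact Set.mem_image_of_mem _ ha1
      · rw [hAt]; exact Set.mem_image_of_mem _ ha2
  -- backward transport
  have bwd : ∀ (j : Fin k) (x : E), x ∈ S → ∀ β, Bridge At D (t j x) β →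
      ∃ y, Bridge At S x y ∧ β = t j y := by
    intro j x hx β hb
    induction hb with
    | refl => exact ⟨x, Relation.ReflTransGen.refl, rfl⟩
    | tail _ step ih =>
      obtain ⟨y, hy, rfl⟩ := ih
      have hyS : y ∈ S := bridge_mem hy hx
      obtain ⟨_, hm2, a, ha1, ha2⟩ := step
      obtain ⟨j', z, hz, rfl⟩ := Set.mem_iUnion.1 hm2
      rw [hAt] at ha1 ha2
      have hj : j' = j := by
        by_contra hjj
        have := hdisj j j' (fun h => hjj h.symm)
        have haR : a ∈ Set.range (τ j) ∩ Set.range (τ j') := by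
          constructor
          · obtain ⟨b, _, hb⟩ := ha1; exact ⟨b, hb⟩
          · obtain ⟨b, _, hb⟩ := ha2; exact ⟨b, hb⟩
        rw [this] at haR
        exact haR
      subst hj
      obtain ⟨a1, ha1', rfl⟩ := ha1
      obtain ⟨a2, ha2', heq⟩ := ha2
      have : a2 = a1 := hτ j' heq
      subst this
      exact ⟨z, hy.tail ⟨hyS, hz, ⟨a2, ha1', ha2'⟩⟩, rfl⟩
  have classeq : ∀ (j : Fin k) (x : E), x ∈ S →
      {β | Bridge At D (t j x) β} = t j '' {y | Bridge At S x y} := by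
    intro j x hx
    ext β
    constructor
    · intro hb
      obtain ⟨y, hy, rfl⟩ := bwd j x hx β hb
      exact ⟨y, hy, rfl⟩
    · rintro ⟨y, hy, rfl⟩
      exact fwd j x y hy
  ext C
  constructor
  · rintro ⟨α, hα, rfl⟩
    obtain ⟨j, x, hx, rfl⟩ := Set.mem_iUnion.1 hα
    exact ⟨j, {y | Bridge At S x y}, ⟨x, hx, rfl⟩, classeq j x hx⟩
  · rintro ⟨j, 𝔟, ⟨x, hx, rfl⟩, rfl⟩
    exact ⟨t j x, Set.mem_iUnion.2 ⟨j, Set.mem_image_of_mem _ hx⟩, (classeq j x hx).symm⟩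
end

section
/- Let k, n ∈ ℕ with k ≥ 1. Let b₁, …, b_n, b'₁, …, b'_n be finite multisets of points all of whose elements have nonempty atom sets, and suppose the atoms occurring in distinct copies are disjoint: the renamings t̂_1, …, t̂_k (homomorphic extensions to points of injections t_j : A → A with pairwise disjoint images) are used to form dig_1^k(b_i) = ∑_{j=1}^k map(t̂_j) b_i. If there exists a partial injection ρ of atoms with ρ · dig_1^k(b_i) = dig_1^k(b'_i) for every i ∈ {1,…,n}, then there exists a partial injection τ of atoms with τ · b_i = b'_i for every i ∈ {1,…,n}. -/
inductive Pt (A : Type) : Type where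
  | atom : A → Pt A
  | star : Bool → Pt A
  | pair : Bool → Pt A → Pt A → Pt A
  | bag  : Bool → List (Pt A) → Pt A

namespace Pt

variable {A : Type}

/-- The homomorphic extension to points of a map on atoms. -/
def rename (t : A → A) : Pt A → Pt A
  | .atom γ => .atom (t γ)
  | .star ι => .star ι
  | .pair ι a b => .pair ι (rename t a) (rename t b)
  | .bag ι l => .bag ι (l.attach.map (fun x => rename t x.1))
decreasing_by
  all_goals first
    | (simp; omega)
    | (have := List.sizeOf_lt_of_mem x.2; simp; omega)
    | simp

/-- The set of atoms occurring in a point. -/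
def At : Pt A → Set A
  | .atom γ => {γ}
  | .star _ => ∅
  | .pair _ a b => At a ∪ At b
  | .bag _ l => ⋃ x ∈ l.attach, At x.1
decreasing_by
  all_goals first
    | (simp; omega)
    | (have := List.sizeOf_lt_of_mem x.2; simp; omega)
    | simp

/-- The set of atoms occurring in a finite multiset of points. -/
def AtM (b : Multiset (Pt A)) : Set A :=
  ⋃ α ∈ b, At α

/-- `dig_1^k`: the sum of the `k` renamed copies of `b`. -/
def dig (k : ℕ) (t : Fin k → A → A) (b : Multiset (Pt A)) : Multiset (Pt A) :=
  ∑ j : Fin k, b.map (rename (t j))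

theorem rename_bag (u : A → A) (ι : Bool) (l : List (Pt A)) :
    rename u (.bag ι l) = .bag ι (l.map (rename u)) := by
  rw [rename, List.attach_map_val]

theorem At_bag (ι : Bool) (l : List (Pt A)) :
    At (.bag ι l : Pt A) = ⋃ x ∈ l, At x := by
  rw [At]
  ext a
  simp

theorem At_atom (γ : A) : At (.atom γ : Pt A) = {γ} := by rw [At]
theorem At_star (ι : Bool) : At (.star ι : Pt A) = ∅ := by rw [At]
theorem At_pair (ι : Bool) (p q : Pt A) : At (.pair ι p q) = At p ∪ At q := by rw [At]

theorem At_finite : (p : Pt A) → (At p).Finite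
  | .atom γ => by rw [At_atom]; exact Set.finite_singleton γ
  | .star _ => by rw [At_star]; exact Set.finite_empty
  | .pair _ a b => by rw [At_pair]; exact (At_finite a).union (At_finite b)
  | .bag _ l => by
      rw [At_bag]
      exact Set.Finite.biUnion l.finite_toSet (fun x hx => At_finite x)
decreasing_by
  all_goals first
    | (simp; omega)
    | (have := List.sizeOf_lt_of_mem hx; simp; omega)
    | simp

theorem At_rename (u : A → A) : (p : Pt A) → At (rename u p) = u '' At p
  | .atom γ => by rw [rename]; simp [At_atom]
  | .star ι => by rw [rename]; simp [At_star]
  | .pair ι a b => by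
      rw [rename, At_pair, At_pair, At_rename u a, At_rename u b, Set.image_union]
  | .bag ι l => by
      rw [rename_bag, At_bag, At_bag]
      ext a
      constructor
      · intro h
        simp only [Set.mem_iUnion, List.mem_map] at h
        obtain ⟨x, ⟨y, hx, rfl⟩, hmem⟩ := h
        rw [At_rename u y] at hmem
        obtain ⟨a0, ha0, rfl⟩ := hmem
        exact ⟨a0, by simpa using ⟨y, hx, ha0⟩, rfl⟩
      · intro h
        obtain ⟨a0, ha0, rfl⟩ := h
        simp only [Set.mem_iUnion] at ha0 ⊢
        obtain ⟨y, hx, hy0⟩ := ha0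
        exact ⟨rename u y, by simpa using ⟨y, hx, rfl⟩, by rw [At_rename u y]; exact ⟨a0, hy0, rfl⟩⟩
decreasing_by
  all_goals first
    | (simp; omega)
    | (have := List.sizeOf_lt_of_mem hx; simp; omega)
    | simp

theorem rename_congr {u v : A → A} : (p : Pt A) → (∀ a ∈ At p, u a = v a) → rename u p = rename v p
  | .atom γ, h => by rw [rename, rename, h γ (by rw [At_atom]; rfl)]
  | .star ι, _ => by rw [rename, rename]
  | .pair ι a b, h => by
      rw [rename, rename, rename_congr a (fun x hx => h x (by rw [At_pair]; exact Or.inl hx)),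
        rename_congr b (fun x hx => h x (by rw [At_pair]; exact Or.inr hx))]
  | .bag ι l, h => by
      rw [rename_bag, rename_bag]
      congr 1
      refine List.map_congr_left (fun y hx => ?_)
      exact rename_congr y (fun a ha => h a (by rw [At_bag]; simp only [Set.mem_iUnion]; exact ⟨y, hx, ha⟩))
decreasing_by
  all_goals first
    | (simp; omega)
    | (have := List.sizeOf_lt_of_mem hx; simp; omega)
    | simp

theorem rename_comp (u v : A → A) : (p : Pt A) → rename u (rename v p) = rename (u ∘ v) p
  | .atom γ => by simp only [rename]; rfl
  | .star ι => by simp only [rename]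
  | .pair ι a b => by
      simp only [rename]
      rw [rename_comp u v a, rename_comp u v b]
  | .bag ι l => by
      rw [rename_bag, rename_bag, rename_bag, List.map_map]
      congr 1
      refine List.map_congr_left (fun y hx => ?_)
      exact rename_comp u v y
decreasing_by
  all_goals first
    | (simp; omega)
    | (have := List.sizeOf_lt_of_mem hx; simp; omega)
    | simp

theorem rename_id : (p : Pt A) → rename id p = p
  | .atom γ => by rw [rename]; rfl
  | .star ι => by rw [rename]
  | .pair ι a b => by rw [rename, rename_id a, rename_id b]
  | .bag ι l => by
      rw [rename_bag]
      congr 1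
      conv_rhs => rw [← List.map_id l]
      refine List.map_congr_left (fun y hx => ?_)
      exact rename_id y
decreasing_by
  all_goals first
    | (simp; omega)
    | (have := List.sizeOf_lt_of_mem hx; simp; omega)
    | simp

theorem rename_injective [Nonempty A] {u : A → A} (hu : Function.Injective u) :
    Function.Injective (rename u) := by
  have h : Function.LeftInverse (rename (Function.invFun u)) (rename u) := by
    intro p
    rw [rename_comp]
    rw [show (Function.invFun u ∘ u) = id from funext fun a => Function.leftInverse_invFun hu a]
    exact rename_id p
  exact h.injective

theorem mem_AtM {m : Multiset (Pt A)} {a : A} : a ∈ AtM m ↔ ∃ α ∈ m, a ∈ At α := by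
  simp [AtM]

theorem AtM_map_rename (u : A → A) (m : Multiset (Pt A)) :
    AtM (m.map (rename u)) = u '' AtM m := by
  ext a
  simp only [mem_AtM, Multiset.mem_map, Set.mem_image]
  constructor
  · rintro ⟨α, ⟨β, hβ, rfl⟩, ha⟩
    rw [At_rename] at ha
    obtain ⟨a0, h0, rfl⟩ := ha
    exact ⟨a0, ⟨β, hβ, h0⟩, rfl⟩
  · rintro ⟨a0, ⟨β, hβ, h0⟩, rfl⟩
    exact ⟨rename u β, ⟨β, hβ, rfl⟩, by rw [At_rename]; exact ⟨a0, h0, rfl⟩⟩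

theorem AtM_sum {ι : Type*} (F : Finset ι) (s : ι → Multiset (Pt A)) :
    AtM (∑ x ∈ F, s x) = ⋃ x ∈ F, AtM (s x) := by
  ext a
  simp only [mem_AtM, Set.mem_iUnion, Multiset.mem_sum]
  aesop

theorem AtM_dig (k : ℕ) (t : Fin k → A → A) (m : Multiset (Pt A)) :
    AtM (dig k t m) = ⋃ j, t j '' AtM m := by
  rw [dig, AtM_sum]
  simp [AtM_map_rename]

theorem map_fsum {ι β γ : Type*} (F : Finset ι) (s : ι → Multiset β) (f : β → γ) :
    (∑ x ∈ F, s x).map f = ∑ x ∈ F, (s x).map f := by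
  classical
  induction F using Finset.induction with
  | empty => simp
  | @insert _ _ h ih => simp [Finset.sum_insert h, ih]

theorem filter_fsum {ι β : Type*} (F : Finset ι) (s : ι → Multiset β) (p : β → Prop)
    [DecidablePred p] :
    (∑ x ∈ F, s x).filter p = ∑ x ∈ F, (s x).filter p := by
  classical
  induction F using Finset.induction with
  | empty => simp
  | @insert _ _ h ih => simp [Finset.sum_insert h, Multiset.filter_add, ih]

theorem sum_filter_eq {ι β : Type*} (F : Finset ι) (s : Multiset β) (p : ι → β → Prop)
    [∀ x, DecidablePred (p x)]
    (h : ∀ y ∈ s, ∃! x, x ∈ F ∧ p x y) :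
    ∑ x ∈ F, s.filter (p x) = s := by
  classical
  induction s using Multiset.induction with
  | empty => simp
  | cons a s ih =>
    have h' : ∀ y ∈ s, ∃! x, x ∈ F ∧ p x y := fun y hy => h y (Multiset.mem_cons_of_mem hy)
    simp only [Multiset.filter_cons]
    rw [Finset.sum_add_distrib, ih h']
    obtain ⟨x₀, ⟨hx₀F, hx₀p⟩, huniq⟩ := h a (Multiset.mem_cons_self a s)
    have hsum : ∑ x ∈ F, (if p x a then ({a} : Multiset β) else 0) = {a} := by
      rw [Finset.sum_eq_single x₀]
      · rw [if_pos hx₀p]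
      · intro x hx hne
        rw [if_neg (fun hp => hne (huniq x ⟨hx, hp⟩))]
      · intro hx
        exact absurd hx₀F hx
    rw [hsum]
    rw [Multiset.singleton_add]

/-- Uniformity of the renaming data along the atom-sharing equivalence. -/
theorem uniform {k n : ℕ} {t : Fin k → A → A}
    (huniq : ∀ (j j' : Fin k) (x y : A), t j x = t j' y → j = j' ∧ x = y)
    {f : A → A} {b b' : Fin n → Multiset (Pt A)}
    (heq : ∀ i, (dig k t (b i)).map (rename f) = dig k t (b' i))
    {X : Set A} (hX : ∀ i, ∀ α ∈ b i, ∀ a ∈ At α, a ∈ X)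
    {J : A → Fin k → Fin k} {c : A → Fin k → A}
    (hJc : ∀ a ∈ X, ∀ j, f (t j a) = t (J a j) (c a j))
    {a a' : A}
    (h : Relation.EqvGen (fun x y => ∃ i, ∃ α ∈ b i, x ∈ At α ∧ y ∈ At α) a a') (j : Fin k) :
    J a j = J a' j ∧
      Relation.EqvGen (fun x y => ∃ i, ∃ β ∈ b' i, x ∈ At β ∧ y ∈ At β) (c a j) (c a' j) := by
  induction h with
  | rel x y hxy =>
      obtain ⟨i, α, hα, hx, hy⟩ := hxy
      have hmem : (rename (t j) α) ∈ dig k t (b i) := by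
        rw [dig]
        exact Multiset.mem_sum.mpr ⟨j, Finset.mem_univ j, Multiset.mem_map_of_mem _ hα⟩
      have hmem2 : rename f (rename (t j) α) ∈ dig k t (b' i) := by
        rw [← heq i]; exact Multiset.mem_map_of_mem _ hmem
      rw [dig] at hmem2
      obtain ⟨j', _, hmm⟩ := Multiset.mem_sum.mp hmem2
      obtain ⟨β, hβ, heqp⟩ := Multiset.mem_map.mp hmm
      have hAtp : t j' '' At β = f '' (t j '' At α) := by
        have h1 := congrArg At heqp
        rwa [At_rename, At_rename, At_rename] at h1
      have key : ∀ z ∈ At α, J z j = j' ∧ c z j ∈ At β := by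
        intro z hz
        have h2 : f (t j z) ∈ t j' '' At β := by
          rw [hAtp]; exact ⟨t j z, ⟨z, hz, rfl⟩, rfl⟩
        obtain ⟨w, hw, hweq⟩ := h2
        have h3 := hJc z (hX i α hα z hz) j
        have h4 := huniq (J z j) j' (c z j) w (by rw [← h3, hweq])
        exact ⟨h4.1, by rw [h4.2]; exact hw⟩
      obtain ⟨e1, m1⟩ := key x hx
      obtain ⟨e2, m2⟩ := key y hy
      exact ⟨e1.trans e2.symm, Relation.EqvGen.rel _ _ ⟨i, β, hβ, m1, m2⟩⟩
  | refl x => exact ⟨rfl, Relation.EqvGen.refl _⟩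
  | symm x y _ ih => exact ⟨ih.1.symm, Relation.EqvGen.symm _ _ ih.2⟩
  | trans x y z _ _ ih1 ih2 =>
      exact ⟨ih1.1.trans ih2.1, Relation.EqvGen.trans _ _ _ ih1.2 ih2.2⟩


/-- If the `dig_1^k`s (built from injective renamings with pairwise disjoint
ranges) of two tuples of multisets of atom-nonempty points are related by a
partial injection of atoms, then so are the tuples themselves. -/
theorem stmt15 (k n : ℕ) (hk : 1 ≤ k)
    (t : Fin k → A → A) (ht : ∀ j, Function.Injective (t j))
    (hdisj : ∀ j j' : Fin k, j ≠ j' → Set.range (t j) ∩ Set.range (t j') = ∅)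
    (b b' : Fin n → Multiset (Pt A))
    (hb : ∀ i, ∀ α ∈ b i, (At α).Nonempty)
    (hb' : ∀ i, ∀ α ∈ b' i, (At α).Nonempty)
    (hρ : ∃ (f : A → A) (dom : Set A), Set.InjOn f dom ∧
      (∀ i, AtM (dig k t (b i)) ⊆ dom) ∧
      ∀ i, (dig k t (b i)).map (rename f) = dig k t (b' i)) :
    ∃ (g : A → A) (dom' : Set A), Set.InjOn g dom' ∧
      (∀ i, AtM (b i) ⊆ dom') ∧ ∀ i, (b i).map (rename g) = b' i := by
  classical
  cases isEmpty_or_nonempty A with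
  | inl hA =>
      refine ⟨id, ∅, ?_, ?_, ?_⟩
      · intro x hx; exact absurd hx (Set.notMem_empty x)
      · intro i a ha; exact (hA.false a).elim
      · intro i
        have hb0 : b i = 0 := Multiset.eq_zero_of_forall_notMem (fun α hα => by
          obtain ⟨a, _⟩ := hb i α hα; exact (hA.false a).elim)
        have hb'0 : b' i = 0 := Multiset.eq_zero_of_forall_notMem (fun α hα => by
          obtain ⟨a, _⟩ := hb' i α hα; exact (hA.false a).elim)
        rw [hb0, hb'0]; rfl
  | inr hA =>
  obtain ⟨f, dom, hinj, hdom, heq⟩ := hρ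
  -- uniqueness of copies
  have huniq : ∀ (j j' : Fin k) (x y : A), t j x = t j' y → j = j' ∧ x = y := by
    intro j j' x y hxy
    rcases eq_or_ne j j' with rfl | hne
    · exact ⟨rfl, ht j hxy⟩
    · exfalso
      have hmem : t j x ∈ Set.range (t j) ∩ Set.range (t j') := ⟨⟨x, rfl⟩, ⟨y, hxy.symm⟩⟩
      rw [hdisj j j' hne] at hmem
      exact hmem
  set X : Set A := ⋃ i, AtM (b i) with hXdef
  set X' : Set A := ⋃ i, AtM (b' i) with hX'def
  have hXofAt : ∀ i, ∀ α ∈ b i, ∀ a ∈ At α, a ∈ X :=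
    fun i α hα a ha => Set.mem_iUnion.mpr ⟨i, mem_AtM.mpr ⟨α, hα, ha⟩⟩
  have hX'ofAt : ∀ i, ∀ β ∈ b' i, ∀ a ∈ At β, a ∈ X' :=
    fun i β hβ a ha => Set.mem_iUnion.mpr ⟨i, mem_AtM.mpr ⟨β, hβ, ha⟩⟩
  have hAt : ∀ i, AtM (dig k t (b' i)) = f '' AtM (dig k t (b i)) := by
    intro i
    rw [← heq i, AtM_map_rename]
  -- forward choice
  have hexF : ∀ (a : A) (j : Fin k), ∃ (j' : Fin k) (z : A),
      a ∈ X → (z ∈ X' ∧ f (t j a) = t j' z) := by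
    intro a j
    by_cases ha : a ∈ X
    · obtain ⟨i, hai⟩ := Set.mem_iUnion.mp ha
      have h1 : t j a ∈ AtM (dig k t (b i)) := by
        rw [AtM_dig]
        exact Set.mem_iUnion.mpr ⟨j, ⟨a, hai, rfl⟩⟩
      have h2 : f (t j a) ∈ AtM (dig k t (b' i)) := by
        rw [hAt i]
        exact ⟨_, h1, rfl⟩
      rw [AtM_dig] at h2
      obtain ⟨j', hj'⟩ := Set.mem_iUnion.mp h2
      obtain ⟨z, hz, hzeq⟩ := hj'
      exact ⟨j', z, fun _ => ⟨Set.mem_iUnion.mpr ⟨i, hz⟩, hzeq.symm⟩⟩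
    · exact ⟨j, Classical.arbitrary A, fun h => absurd h ha⟩
  choose J c hJc using hexF
  -- inverse function
  set f' : A → A := Function.invFunOn f dom with hf'def
  have hdomX : ∀ a ∈ X, ∀ j : Fin k, t j a ∈ dom := by
    intro a ha j
    obtain ⟨i, hai⟩ := Set.mem_iUnion.mp ha
    apply hdom i
    rw [AtM_dig]
    exact Set.mem_iUnion.mpr ⟨j, ⟨a, hai, rfl⟩⟩
  have hf'f : ∀ y ∈ dom, f' (f y) = y := fun y hy => hinj.leftInvOn_invFunOn hy
  have heq' : ∀ i, (dig k t (b' i)).map (rename f') = dig k t (b i) := by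
    intro i
    rw [← heq i, Multiset.map_map]
    have hcongr : ∀ π ∈ dig k t (b i), (rename f' ∘ rename f) π = π := by
      intro π hπ
      simp only [Function.comp_apply]
      rw [rename_comp]
      have h1 : rename (f' ∘ f) π = rename id π := by
        apply rename_congr
        intro a ha
        exact hf'f a (hdom i (mem_AtM.mpr ⟨π, hπ, ha⟩))
      rw [h1, rename_id]
    rw [Multiset.map_congr rfl hcongr, Multiset.map_id']
  have hff' : ∀ z ∈ X', ∀ j' : Fin k, f (f' (t j' z)) = t j' z := by
    intro z hz j'
    obtain ⟨i, hzi⟩ := Set.mem_iUnion.mp hz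
    have h1 : t j' z ∈ AtM (dig k t (b' i)) := by
      rw [AtM_dig]
      exact Set.mem_iUnion.mpr ⟨j', ⟨z, hzi, rfl⟩⟩
    rw [hAt i] at h1
    obtain ⟨w, hw, hweq⟩ := h1
    exact Function.invFunOn_eq ⟨w, hdom i hw, hweq⟩
  -- backward choice
  have hexB : ∀ (z : A) (j' : Fin k), ∃ (jb : Fin k) (w : A),
      z ∈ X' → (w ∈ X ∧ f' (t j' z) = t jb w) := by
    intro z j'
    by_cases hz : z ∈ X'
    · obtain ⟨i, hzi⟩ := Set.mem_iUnion.mp hz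
      have h1 : t j' z ∈ AtM (dig k t (b' i)) := by
        rw [AtM_dig]
        exact Set.mem_iUnion.mpr ⟨j', ⟨z, hzi, rfl⟩⟩
      have h2 : f' (t j' z) ∈ AtM (dig k t (b i)) := by
        have h3 : AtM (dig k t (b i)) = f' '' AtM (dig k t (b' i)) := by
          rw [← heq' i, AtM_map_rename]
        rw [h3]
        exact ⟨_, h1, rfl⟩
      rw [AtM_dig] at h2
      obtain ⟨jb, hjb⟩ := Set.mem_iUnion.mp h2
      obtain ⟨w, hw, hweq⟩ := hjb
      exact ⟨jb, w, fun _ => ⟨Set.mem_iUnion.mpr ⟨i, hw⟩, hweq.symm⟩⟩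
    · exact ⟨j', Classical.arbitrary A, fun h => absurd h hz⟩
  choose J' c' hJ'c using hexB
  -- inverse identities
  have inv1 : ∀ a ∈ X, ∀ j : Fin k, J' (c a j) (J a j) = j ∧ c' (c a j) (J a j) = a := by
    intro a ha j
    obtain ⟨hzX', hfeq⟩ := hJc a j ha
    have h1 : f' (t (J a j) (c a j)) = t j a := by
      rw [← hfeq]
      exact hf'f _ (hdomX a ha j)
    have h2 := (hJ'c (c a j) (J a j) hzX').2
    have h3 := huniq (J' (c a j) (J a j)) j (c' (c a j) (J a j)) a (by rw [← h2, h1])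
    exact ⟨h3.1, h3.2⟩
  have inv2 : ∀ z ∈ X', ∀ j' : Fin k, J (c' z j') (J' z j') = j' ∧ c (c' z j') (J' z j') = z := by
    intro z hz j'
    obtain ⟨hwX, hfeq⟩ := hJ'c z j' hz
    have h1 : f (t (J' z j') (c' z j')) = t j' z := by
      rw [← hfeq]
      exact hff' z hz j'
    have h2 := (hJc (c' z j') (J' z j') hwX).2
    have h3 := huniq (J (c' z j') (J' z j')) j' (c (c' z j') (J' z j')) z (by rw [← h2, h1])
    exact ⟨h3.1, h3.2⟩
  -- uniformity
  have UF : ∀ {a a' : A},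
      Relation.EqvGen (fun x y => ∃ i, ∃ α ∈ b i, x ∈ At α ∧ y ∈ At α) a a' → ∀ j : Fin k,
      J a j = J a' j ∧
        Relation.EqvGen (fun x y => ∃ i, ∃ β ∈ b' i, x ∈ At β ∧ y ∈ At β) (c a j) (c a' j) :=
    fun h j => uniform huniq heq hXofAt (fun a ha j => (hJc a j ha).2) h j
  have UB : ∀ {z z' : A},
      Relation.EqvGen (fun x y => ∃ i, ∃ β ∈ b' i, x ∈ At β ∧ y ∈ At β) z z' → ∀ j' : Fin k,
      J' z j' = J' z' j' ∧
        Relation.EqvGen (fun x y => ∃ i, ∃ α ∈ b i, x ∈ At α ∧ y ∈ At α) (c' z j') (c' z' j') :=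
    fun h j' => uniform huniq heq' hX'ofAt (fun z hz j' => (hJ'c z j' hz).2) h j'
  -- components
  set SL : A → A → Prop := fun x y => ∃ i, ∃ α ∈ b i, x ∈ At α ∧ y ∈ At α with hSLdef
  set SR : A → A → Prop := fun x y => ∃ i, ∃ β ∈ b' i, x ∈ At β ∧ y ∈ At β with hSRdef
  set Cmp : A → Set A := fun a => {x | Relation.EqvGen SL a x} with hCmpdef
  set Cmp' : A → Set A := fun z => {x | Relation.EqvGen SR z x} with hCmp'def
  have hCmpeq : ∀ x y, Relation.EqvGen SL x y → Cmp x = Cmp y := by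
    intro x y h
    ext z
    constructor
    · intro hz
      exact Relation.EqvGen.trans _ _ _ (Relation.EqvGen.symm _ _ h) hz
    · intro hz
      exact Relation.EqvGen.trans _ _ _ h hz
  have hCmp'eq : ∀ x y, Relation.EqvGen SR x y → Cmp' x = Cmp' y := by
    intro x y h
    ext z
    constructor
    · intro hz
      exact Relation.EqvGen.trans _ _ _ (Relation.EqvGen.symm _ _ h) hz
    · intro hz
      exact Relation.EqvGen.trans _ _ _ h hz
  have hEfromCmp : ∀ x y, Cmp x = Cmp y → Relation.EqvGen SL x y := by
    intro x y h
    have : y ∈ Cmp x := by rw [h]; exact Relation.EqvGen.refl y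
    exact this
  have hEfromCmp' : ∀ x y, Cmp' x = Cmp' y → Relation.EqvGen SR x y := by
    intro x y h
    have : y ∈ Cmp' x := by rw [h]; exact Relation.EqvGen.refl y
    exact this
  -- finiteness
  have hAtMfin : ∀ (m : Multiset (Pt A)), (AtM m).Finite :=
    fun m => Set.Finite.biUnion m.finite_toSet (fun α _ => At_finite α)
  have hXfin : X.Finite := Set.finite_iUnion (fun i => hAtMfin (b i))
  have hX'fin : X'.Finite := Set.finite_iUnion (fun i => hAtMfin (b' i))
  set V : Finset (Set A) := hXfin.toFinset.image Cmp with hVdef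
  set V' : Finset (Set A) := hX'fin.toFinset.image Cmp' with hV'def
  have hCmpV : ∀ a ∈ X, Cmp a ∈ V :=
    fun a ha => Finset.mem_image.mpr ⟨a, hXfin.mem_toFinset.mpr ha, rfl⟩
  have hCmpV' : ∀ z ∈ X', Cmp' z ∈ V' :=
    fun z hz => Finset.mem_image.mpr ⟨z, hX'fin.mem_toFinset.mpr hz, rfl⟩
  -- representatives
  have hrep : ∀ L : {x // x ∈ V}, ∃ a, a ∈ X ∧ Cmp a = L.1 := by
    intro L
    obtain ⟨a, haf, hae⟩ := Finset.mem_image.mp L.2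
    exact ⟨a, hXfin.mem_toFinset.mp haf, hae⟩
  choose rep hrepX hrepC using hrep
  have hrep' : ∀ L : {x // x ∈ V'}, ∃ z, z ∈ X' ∧ Cmp' z = L.1 := by
    intro L
    obtain ⟨z, hzf, hze⟩ := Finset.mem_image.mp L.2
    exact ⟨z, hX'fin.mem_toFinset.mp hzf, hze⟩
  choose rep' hrep'X hrep'C using hrep'
  -- the bipartite multigraph and its key injectivity
  set T : {x // x ∈ V} → Finset (Set A) :=
    fun L => Finset.univ.image (fun j : Fin k => Cmp' (c (rep L) j)) with hTdef
  have hTV' : ∀ L, ∀ C ∈ T L, C ∈ V' := by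
    intro L C hC
    obtain ⟨j, _, rfl⟩ := Finset.mem_image.mp hC
    exact hCmpV' _ (hJc (rep L) j (hrepX L)).1
  have hinj2 : ∀ (L1 L2 : {x // x ∈ V}) (j1 j2 : Fin k),
      Cmp' (c (rep L1) j1) = Cmp' (c (rep L2) j2) → J (rep L1) j1 = J (rep L2) j2 →
      L1 = L2 ∧ j1 = j2 := by
    intro L1 L2 j1 j2 hC hJeq
    have hE' : Relation.EqvGen SR (c (rep L1) j1) (c (rep L2) j2) := hEfromCmp' _ _ hC
    have hU := UB hE' (J (rep L1) j1)
    have i1 := inv1 (rep L1) (hrepX L1) j1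
    have i2 := inv1 (rep L2) (hrepX L2) j2
    rw [← hJeq] at i2
    have hj : j1 = j2 := by rw [← i1.1, ← i2.1]; exact hU.1
    have hErep : Relation.EqvGen SL (rep L1) (rep L2) := by
      have h2 := hU.2
      rw [i1.2, i2.2] at h2
      exact h2
    refine ⟨Subtype.ext ?_, hj⟩
    rw [← hrepC L1, ← hrepC L2]
    exact hCmpeq _ _ hErep
  have hinj2' : ∀ (L1 L2 : {x // x ∈ V'}) (j1 j2 : Fin k),
      Cmp (c' (rep' L1) j1) = Cmp (c' (rep' L2) j2) → J' (rep' L1) j1 = J' (rep' L2) j2 →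
      L1 = L2 ∧ j1 = j2 := by
    intro L1 L2 j1 j2 hC hJeq
    have hE : Relation.EqvGen SL (c' (rep' L1) j1) (c' (rep' L2) j2) := hEfromCmp _ _ hC
    have hU := UF hE (J' (rep' L1) j1)
    have i1 := inv2 (rep' L1) (hrep'X L1) j1
    have i2 := inv2 (rep' L2) (hrep'X L2) j2
    rw [← hJeq] at i2
    have hj : j1 = j2 := by rw [← i1.1, ← i2.1]; exact hU.1
    have hErep : Relation.EqvGen SR (rep' L1) (rep' L2) := by
      have h2 := hU.2
      rw [i1.2, i2.2] at h2
      exact h2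
    refine ⟨Subtype.ext ?_, hj⟩
    rw [← hrep'C L1, ← hrep'C L2]
    exact hCmp'eq _ _ hErep
  -- Hall condition
  have hall : ∀ s : Finset {x // x ∈ V}, s.card ≤ (s.biUnion T).card := by
    intro s
    have hmaps : ∀ p ∈ s ×ˢ (Finset.univ : Finset (Fin k)),
        (Cmp' (c (rep p.1) p.2), J (rep p.1) p.2) ∈
          (s.biUnion T) ×ˢ (Finset.univ : Finset (Fin k)) := by
      rintro ⟨L, j⟩ hp
      rw [Finset.mem_product] at hp ⊢
      refine ⟨Finset.mem_biUnion.mpr ⟨L, hp.1, ?_⟩, Finset.mem_univ _⟩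
      exact Finset.mem_image.mpr ⟨j, Finset.mem_univ j, rfl⟩
    have hcard := Finset.card_le_card_of_injOn
      (fun p : {x // x ∈ V} × Fin k => (Cmp' (c (rep p.1) p.2), J (rep p.1) p.2)) hmaps ?_
    · rw [Finset.card_product, Finset.card_product, Finset.card_univ, Fintype.card_fin] at hcard
      exact Nat.le_of_mul_le_mul_right hcard (by omega)
    · rintro ⟨L1, j1⟩ _ ⟨L2, j2⟩ _ hpe
      have h1 : Cmp' (c (rep L1) j1) = Cmp' (c (rep L2) j2) := congrArg Prod.fst hpe
      have h2 : J (rep L1) j1 = J (rep L2) j2 := congrArg Prod.snd hpe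
      obtain ⟨hL, hj⟩ := hinj2 L1 L2 j1 j2 h1 h2
      rw [hL, hj]
  obtain ⟨M, hMinj, hMT⟩ := (Finset.all_card_le_biUnion_card_iff_exists_injective T).mp hall
  have hMV' : ∀ L, M L ∈ V' := fun L => hTV' L _ (hMT L)
  have hjsel : ∀ L : {x // x ∈ V}, ∃ j : Fin k, Cmp' (c (rep L) j) = M L := by
    intro L
    obtain ⟨j, _, hje⟩ := Finset.mem_image.mp (hMT L)
    exact ⟨j, hje⟩
  choose jsel hjsel2 using hjsel
  -- cardinality equality and surjectivity of the matching
  have hcard1 : Fintype.card ({x // x ∈ V} × Fin k) ≤ Fintype.card ({x // x ∈ V'} × Fin k) := by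
    apply Fintype.card_le_of_injective
      (fun p : {x // x ∈ V} × Fin k => ((⟨Cmp' (c (rep p.1) p.2), hCmpV' _ (hJc (rep p.1) p.2 (hrepX p.1)).1⟩ :
        {x // x ∈ V'}), J (rep p.1) p.2))
    rintro ⟨L1, j1⟩ ⟨L2, j2⟩ hpe
    have h1 : Cmp' (c (rep L1) j1) = Cmp' (c (rep L2) j2) :=
      congrArg (fun q => q.1.1) hpe
    have h2 : J (rep L1) j1 = J (rep L2) j2 := congrArg Prod.snd hpe
    obtain ⟨hL, hj⟩ := hinj2 L1 L2 j1 j2 h1 h2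
    rw [hL, hj]
  have hcard2 : Fintype.card ({x // x ∈ V'} × Fin k) ≤ Fintype.card ({x // x ∈ V} × Fin k) := by
    apply Fintype.card_le_of_injective
      (fun p : {x // x ∈ V'} × Fin k => ((⟨Cmp (c' (rep' p.1) p.2), hCmpV _ (hJ'c (rep' p.1) p.2 (hrep'X p.1)).1⟩ :
        {x // x ∈ V}), J' (rep' p.1) p.2))
    rintro ⟨L1, j1⟩ ⟨L2, j2⟩ hpe
    have h1 : Cmp (c' (rep' L1) j1) = Cmp (c' (rep' L2) j2) :=
      congrArg (fun q => q.1.1) hpe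
    have h2 : J' (rep' L1) j1 = J' (rep' L2) j2 := congrArg Prod.snd hpe
    obtain ⟨hL, hj⟩ := hinj2' L1 L2 j1 j2 h1 h2
    rw [hL, hj]
  have hcardV : Fintype.card {x // x ∈ V} = Fintype.card {x // x ∈ V'} := by
    have h3 := le_antisymm hcard1 hcard2
    rw [Fintype.card_prod, Fintype.card_prod, Fintype.card_fin] at h3
    exact Nat.eq_of_mul_eq_mul_right (by omega) h3
  set ML : {x // x ∈ V} → {x // x ∈ V'} := fun L => ⟨M L, hMV' L⟩ with hMLdef
  have hMLbij : Function.Bijective ML := by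
    rw [Fintype.bijective_iff_injective_and_card]
    refine ⟨?_, hcardV⟩
    intro L1 L2 h
    exact hMinj (congrArg Subtype.val h)
  -- the renaming
  set g : A → A := fun a => if h : a ∈ X then c a (jsel ⟨Cmp a, hCmpV a h⟩) else a with hgdef
  have hga : ∀ (L : {x // x ∈ V}), ∀ a ∈ X, Cmp a = L.1 → g a = c a (jsel L) := by
    intro L a haX hCa
    have hsub : (⟨Cmp a, hCmpV a haX⟩ : {x // x ∈ V}) = L := Subtype.ext hCa
    show (if h : a ∈ X then c a (jsel ⟨Cmp a, hCmpV a h⟩) else a) = c a (jsel L)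
    rw [dif_pos haX, hsub]
  -- the per-component multiset equation
  have hmain : ∀ (i : Fin n) (L : {x // x ∈ V}),
      ((b i).filter (fun α => At α ⊆ L.1)).map (rename g) =
        (b' i).filter (fun β => At β ⊆ M L) := by
    intro i L
    obtain ⟨a0, j, ha0X, ha0C, hjM, hgL⟩ :
        ∃ (a0 : A) (j : Fin k), a0 ∈ X ∧ Cmp a0 = L.1 ∧ Cmp' (c a0 j) = M L ∧
          (∀ a ∈ X, Cmp a = L.1 → g a = c a j) :=
      ⟨rep L, jsel L, hrepX L, hrepC L, hjsel2 L, fun a ha hC => hga L a ha hC⟩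
    have i0 := inv1 a0 ha0X j
    have hLiff : ∀ (jh : Fin k), ∀ α ∈ b i,
        ((At (rename f (rename (t jh) α)) ⊆ t (J a0 j) '' (Cmp' (c a0 j))) ↔
          (jh = j ∧ At α ⊆ L.1)) := by
      intro jh α hα
      constructor
      · intro hp
        rw [At_rename, At_rename] at hp
        have hall2 : ∀ a ∈ At α, jh = j ∧ a ∈ L.1 := by
          intro a ha
          have haX : a ∈ X := hXofAt i α hα a ha
          have h1 : f (t jh a) ∈ t (J a0 j) '' Cmp' (c a0 j) :=
            hp ⟨t jh a, ⟨a, ha, rfl⟩, rfl⟩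
          obtain ⟨w, hw, hweq⟩ := h1
          obtain ⟨hje, hce⟩ :=
            huniq (J a jh) (J a0 j) (c a jh) w (by rw [← (hJc a jh haX).2, hweq])
          have hwE : Relation.EqvGen SR (c a0 j) (c a jh) := by rw [hce]; exact hw
          have hUB := UB hwE (J a0 j)
          have ia := inv1 a haX jh
          rw [hje] at ia
          constructor
          · rw [← ia.1, ← hUB.1, i0.1]
          · have h2 := hUB.2
            rw [i0.2, ia.2] at h2
            have h4 : a ∈ Cmp a0 := h2
            rw [← ha0C]
            exact h4
        obtain ⟨a1, ha1⟩ := hb i α hα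
        exact ⟨(hall2 a1 ha1).1, fun a ha => (hall2 a ha).2⟩
      · rintro ⟨rfl, hsubset⟩
        rw [At_rename, At_rename]
        rintro x ⟨y, ⟨a, ha, rfl⟩, rfl⟩
        have haX := hXofAt i α hα a ha
        have hE : Relation.EqvGen SL a0 a := by
          have h4 : a ∈ Cmp a0 := by rw [ha0C]; exact hsubset ha
          exact h4
        have hUF := UF hE jh
        rw [(hJc a jh haX).2, ← hUF.1]
        exact ⟨c a jh, hUF.2, rfl⟩
    have hRiff : ∀ (jh' : Fin k), ∀ β ∈ b' i,
        ((At (rename (t jh') β) ⊆ t (J a0 j) '' (Cmp' (c a0 j))) ↔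
          (jh' = J a0 j ∧ At β ⊆ Cmp' (c a0 j))) := by
      intro jh' β hβ
      rw [At_rename]
      constructor
      · intro hp
        obtain ⟨y0, hy0⟩ := hb' i β hβ
        obtain ⟨w, hw, hweq⟩ := hp ⟨y0, hy0, rfl⟩
        obtain ⟨hje, hye⟩ := huniq (J a0 j) jh' w y0 hweq
        refine ⟨hje.symm, ?_⟩
        intro y hy
        obtain ⟨w2, hw2, hw2eq⟩ := hp ⟨y, hy, rfl⟩
        obtain ⟨_, hwy⟩ := huniq (J a0 j) jh' w2 y hw2eq
        rw [← hwy]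
        exact hw2
      · rintro ⟨rfl, hsubset⟩
        exact Set.image_mono hsubset
    have e1 : ((dig k t (b i)).map (rename f)).filter
        (fun π => At π ⊆ t (J a0 j) '' (Cmp' (c a0 j))) =
        ∑ jh : Fin k, ((b i).filter
          (fun α => At (rename f (rename (t jh) α)) ⊆ t (J a0 j) '' (Cmp' (c a0 j)))).map
            (rename f ∘ rename (t jh)) := by
      rw [dig, map_fsum, filter_fsum]
      refine Finset.sum_congr rfl (fun jh _ => ?_)
      rw [Multiset.map_map, Multiset.filter_map]
      rfl
    have e2 : (dig k t (b' i)).filter (fun π => At π ⊆ t (J a0 j) '' (Cmp' (c a0 j))) =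
        ∑ jh' : Fin k, ((b' i).filter
          (fun β => At (rename (t jh') β) ⊆ t (J a0 j) '' (Cmp' (c a0 j)))).map
            (rename (t jh')) := by
      rw [dig, filter_fsum]
      refine Finset.sum_congr rfl (fun jh' _ => ?_)
      rw [Multiset.filter_map]
      rfl
    have hfilter := congrArg
      (Multiset.filter (fun π => At π ⊆ t (J a0 j) '' (Cmp' (c a0 j)))) (heq i)
    rw [e1, e2] at hfilter
    have hL1 : ∑ jh : Fin k, ((b i).filter
          (fun α => At (rename f (rename (t jh) α)) ⊆ t (J a0 j) '' (Cmp' (c a0 j)))).map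
            (rename f ∘ rename (t jh)) =
        ((b i).filter (fun α => At α ⊆ L.1)).map (rename f ∘ rename (t j)) := by
      rw [Finset.sum_eq_single j]
      · congr 1
        apply Multiset.filter_congr
        intro α hα
        rw [hLiff j α hα]
        simp
      · intro jh _ hne
        have hzero : (b i).filter
            (fun α => At (rename f (rename (t jh) α)) ⊆ t (J a0 j) '' (Cmp' (c a0 j))) = 0 :=
          Multiset.filter_eq_nil.mpr
            (fun α hα hcontra => hne (((hLiff jh α hα).1 hcontra).1))
        rw [hzero, Multiset.map_zero]
      · intro hj2
        exact absurd (Finset.mem_univ j) hj2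
    have hR1 : ∑ jh' : Fin k, ((b' i).filter
          (fun β => At (rename (t jh') β) ⊆ t (J a0 j) '' (Cmp' (c a0 j)))).map
            (rename (t jh')) =
        ((b' i).filter (fun β => At β ⊆ Cmp' (c a0 j))).map (rename (t (J a0 j))) := by
      rw [Finset.sum_eq_single (J a0 j)]
      · congr 1
        apply Multiset.filter_congr
        intro β hβ
        rw [hRiff (J a0 j) β hβ]
        simp
      · intro jh' _ hne
        have hzero : (b' i).filter
            (fun β => At (rename (t jh') β) ⊆ t (J a0 j) '' (Cmp' (c a0 j))) = 0 :=
          Multiset.filter_eq_nil.mpr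
            (fun β hβ hcontra => hne (((hRiff jh' β hβ).1 hcontra).1))
        rw [hzero, Multiset.map_zero]
      · intro hj2
        exact absurd (Finset.mem_univ (J a0 j)) hj2
    rw [hL1, hR1] at hfilter
    have hcomm : ∀ α ∈ (b i).filter (fun α => At α ⊆ L.1),
        (rename f ∘ rename (t j)) α = rename (t (J a0 j)) (rename g α) := by
      intro α hαf
      obtain ⟨hα, hsubset⟩ := Multiset.mem_filter.mp hαf
      simp only [Function.comp_apply]
      rw [rename_comp, rename_comp]
      apply rename_congr
      intro a ha
      have haX := hXofAt i α hα a ha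
      have hE : Relation.EqvGen SL a0 a := by
        have h4 : a ∈ Cmp a0 := by rw [ha0C]; exact hsubset ha
        exact h4
      have hUF := UF hE j
      have hCa : Cmp a = L.1 := by rw [← ha0C]; exact (hCmpeq _ _ hE).symm
      simp only [Function.comp_apply]
      rw [(hJc a j haX).2, ← hUF.1, hgL a haX hCa]
    have hmapped : ((b i).filter (fun α => At α ⊆ L.1)).map (rename f ∘ rename (t j)) =
        (((b i).filter (fun α => At α ⊆ L.1)).map (rename g)).map (rename (t (J a0 j))) := by
      rw [Multiset.map_map]
      exact Multiset.map_congr rfl hcomm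
    rw [hmapped] at hfilter
    have hcancel := Multiset.map_injective (rename_injective (ht (J a0 j))) hfilter
    rw [hcancel, hjM]
  -- partitions
  have hpartL : ∀ i : Fin n, ∑ L ∈ V.attach, (b i).filter (fun α => At α ⊆ L.1) = b i := by
    intro i
    apply sum_filter_eq
    intro α hα
    obtain ⟨a1, ha1⟩ := hb i α hα
    have ha1X := hXofAt i α hα a1 ha1
    refine ⟨⟨Cmp a1, hCmpV a1 ha1X⟩, ⟨Finset.mem_attach _ _, ?_⟩, ?_⟩
    · intro y hy
      exact Relation.EqvGen.rel _ _ ⟨i, α, hα, ha1, hy⟩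
    · rintro ⟨Lv, hLv⟩ ⟨-, hsub⟩
      apply Subtype.ext
      obtain ⟨x0, hx0f, rfl⟩ := Finset.mem_image.mp hLv
      exact hCmpeq x0 a1 (hsub ha1)
  have hpartR : ∀ i : Fin n, ∑ C' ∈ V'.attach, (b' i).filter (fun β => At β ⊆ C'.1) = b' i := by
    intro i
    apply sum_filter_eq
    intro β hβ
    obtain ⟨a1, ha1⟩ := hb' i β hβ
    have ha1X := hX'ofAt i β hβ a1 ha1
    refine ⟨⟨Cmp' a1, hCmpV' a1 ha1X⟩, ⟨Finset.mem_attach _ _, ?_⟩, ?_⟩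
    · intro y hy
      exact Relation.EqvGen.rel _ _ ⟨i, β, hβ, ha1, hy⟩
    · rintro ⟨Lv, hLv⟩ ⟨-, hsub⟩
      apply Subtype.ext
      obtain ⟨x0, hx0f, rfl⟩ := Finset.mem_image.mp hLv
      exact hCmp'eq x0 a1 (hsub ha1)
  -- conclusion
  refine ⟨g, X, ?_, ?_, ?_⟩
  · -- injectivity
    intro a1 ha1 a2 ha2 hgeq
    have hg1 : g a1 = c a1 (jsel ⟨Cmp a1, hCmpV a1 ha1⟩) := hga _ a1 ha1 rfl
    have hg2 : g a2 = c a2 (jsel ⟨Cmp a2, hCmpV a2 ha2⟩) := hga _ a2 ha2 rfl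
    rw [hg1, hg2] at hgeq
    have hML1 : Cmp' (c a1 (jsel ⟨Cmp a1, hCmpV a1 ha1⟩)) = M ⟨Cmp a1, hCmpV a1 ha1⟩ := by
      have hE1 : Relation.EqvGen SL (rep ⟨Cmp a1, hCmpV a1 ha1⟩) a1 :=
        hEfromCmp _ _ (hrepC _)
      have hU := (UF hE1 (jsel ⟨Cmp a1, hCmpV a1 ha1⟩)).2
      rw [← hCmp'eq _ _ hU, hjsel2]
    have hML2 : Cmp' (c a2 (jsel ⟨Cmp a2, hCmpV a2 ha2⟩)) = M ⟨Cmp a2, hCmpV a2 ha2⟩ := by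
      have hE2 : Relation.EqvGen SL (rep ⟨Cmp a2, hCmpV a2 ha2⟩) a2 :=
        hEfromCmp _ _ (hrepC _)
      have hU := (UF hE2 (jsel ⟨Cmp a2, hCmpV a2 ha2⟩)).2
      rw [← hCmp'eq _ _ hU, hjsel2]
    have hMeq : M ⟨Cmp a1, hCmpV a1 ha1⟩ = M ⟨Cmp a2, hCmpV a2 ha2⟩ := by
      rw [← hML1, ← hML2, hgeq]
    have hLeq : (⟨Cmp a1, hCmpV a1 ha1⟩ : {x // x ∈ V}) = ⟨Cmp a2, hCmpV a2 ha2⟩ := hMinj hMeq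
    have hjj : jsel ⟨Cmp a1, hCmpV a1 ha1⟩ = jsel ⟨Cmp a2, hCmpV a2 ha2⟩ := by rw [hLeq]
    have hCeq : Cmp a1 = Cmp a2 := congrArg Subtype.val hLeq
    have hE12 := hEfromCmp _ _ hCeq
    have hUF12 := UF hE12 (jsel ⟨Cmp a1, hCmpV a1 ha1⟩)
    have i1 := inv1 a1 ha1 (jsel ⟨Cmp a1, hCmpV a1 ha1⟩)
    have i2 := inv1 a2 ha2 (jsel ⟨Cmp a2, hCmpV a2 ha2⟩)
    rw [← hjj] at hgeq i2
    exact i1.2.symm.trans (by rw [hgeq, hUF12.1]; exact i2.2)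
  · intro i a ha
    exact Set.mem_iUnion.mpr ⟨i, ha⟩
  · intro i
    have hMLsum : ∑ L ∈ V.attach, (b' i).filter (fun β => At β ⊆ M L) =
        ∑ C' ∈ V'.attach, (b' i).filter (fun β => At β ⊆ C'.1) := by
      rw [← Finset.univ_eq_attach, ← Finset.univ_eq_attach]
      exact Fintype.sum_bijective ML hMLbij _ _ (fun L => rfl)
    calc (b i).map (rename g)
        = (∑ L ∈ V.attach, (b i).filter (fun α => At α ⊆ L.1)).map (rename g) := by
          rw [hpartL i]
      _ = ∑ L ∈ V.attach, ((b i).filter (fun α => At α ⊆ L.1)).map (rename g) :=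
          map_fsum _ _ _
      _ = ∑ L ∈ V.attach, (b' i).filter (fun β => At β ⊆ M L) :=
          Finset.sum_congr rfl (fun L _ => hmain i L)
      _ = ∑ C' ∈ V'.attach, (b' i).filter (fun β => At β ⊆ C'.1) := hMLsum
      _ = b' i := hpartR i

end Pt
end
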